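/- arXiv:1902.08299 — 3 statements merged into one kernel-verified Lean document; each statement's English description precedes it below -/
import Mathlib

section
/- Let n, m be natural numbers, let F : (Fin n → Bool) → Bool and G : (Fin m → Bool) → Bool be Boolean functions, and let H be the combiner of F and G, i.e., the Boolean function in the variables (x : Fin n → Bool, y : Fin m → Bool, z : Bool, z' : Bool) defined by H(x,y,z,z') = (F x ∧ z) ∨ (¬z ∧ (∀ i, x i = true) ∧ G y ∧ z'). Then ‖H‖ = ‖F‖ · 2^(m+1) + ‖G‖, where ‖H‖ is the number of tuples (x,y,z,z') on which H evaluates to true. -/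
/-- The combining lemma of Cai and Hemachandra:
`‖H‖ = ‖F‖ * 2^(m+1) + ‖G‖` for the combiner `H` of `F` and `G`. -/
theorem combiner_count (n m : ℕ) (F : (Fin n → Bool) → Bool) (G : (Fin m → Bool) → Bool)
    (H : (Fin n → Bool) → (Fin m → Bool) → Bool → Bool → Bool)
    (hH : ∀ (x : Fin n → Bool) (y : Fin m → Bool) (z z' : Bool),
      H x y z z' = ((F x && z) || (!z && decide (∀ i, x i = true) && G y && z'))) :
    Nat.card {p : (Fin n → Bool) × (Fin m → Bool) × Bool × Bool |
        H p.1 p.2.1 p.2.2.1 p.2.2.2 = true} =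
      Nat.card {σ : Fin n → Bool | F σ = true} * 2 ^ (m + 1) +
        Nat.card {σ : Fin m → Bool | G σ = true} := by
  classical
  simp only [Set.coe_setOf, Nat.card_eq_fintype_card, Fintype.card_subtype]
  simp only [hH]
  rw [Finset.card_filter]
  simp only [Fintype.sum_prod_type, Fintype.sum_bool]
  simp only [Bool.and_true, Bool.and_false, Bool.not_true, Bool.not_false, Bool.false_and,
    Bool.true_and, Bool.or_false, Bool.false_or, if_false, add_zero]
  have h1 : ∀ x : Fin n → Bool,
      ∑ _y : Fin m → Bool, ((if F x = true then (1:ℕ) else 0) + if F x = true then 1 else 0)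
        = if F x = true then 2 ^ (m + 1) else 0 := by
    intro x
    rw [Finset.sum_const]
    cases hFx : F x <;>
      simp [Finset.card_univ, pow_succ, mul_comm, two_mul]
  have h2 : ∀ x : Fin n → Bool,
      ∑ y : Fin m → Bool, (if (decide (∀ i : Fin n, x i = true) && G y) = true then (1:ℕ) else 0)
        = if x = (fun _ => true) then (Finset.filter (fun y => G y = true) Finset.univ).card
          else 0 := by
    intro x
    by_cases hx : ∀ i : Fin n, x i = true
    · have hx' : x = fun _ => true := funext hx
      rw [if_pos hx', Finset.card_filter]
      simp [hx]
    · have hx' : x ≠ fun _ => true := by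
        intro h; exact hx fun i => by rw [h]
      simp [hx, hx']
  calc ∑ x : Fin n → Bool, ∑ y : Fin m → Bool,
        (((if F x = true then (1:ℕ) else 0) + if F x = true then 1 else 0) +
          if (decide (∀ i : Fin n, x i = true) && G y) = true then 1 else 0)
      = ∑ x : Fin n → Bool, ((if F x = true then 2 ^ (m + 1) else 0) +
          if x = (fun _ => true) then (Finset.filter (fun y => G y = true) Finset.univ).card
          else 0) := by
        refine Finset.sum_congr rfl fun x _ => ?_
        rw [Finset.sum_add_distrib, h1 x, h2 x]
    _ = _ := by
        rw [Finset.sum_add_distrib, ← Finset.sum_filter, Finset.sum_const, smul_eq_mul,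
          Finset.sum_ite_eq' Finset.univ (fun _ => true)]
        simp
end

section
/- Let n, m be natural numbers, let F : (Fin n → Bool) → Bool and G : (Fin m → Bool) → Bool be Boolean functions, and let H be the combiner of F and G, i.e., the Boolean function in the variables (x : Fin n → Bool, y : Fin m → Bool, z : Bool, z' : Bool) defined by H(x,y,z,z') = (F x ∧ z) ∨ (¬z ∧ (∀ i, x i = true) ∧ G y ∧ z'). Then both original counts can be decoded from ‖H‖: ‖F‖ = ‖H‖ / 2^(m+1) (natural-number division) and ‖G‖ = ‖H‖ % 2^(m+1). -/
/-- Decoding both counts from the combiner: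
`‖F‖ = ‖H‖ / 2^(m+1)` and `‖G‖ = ‖H‖ % 2^(m+1)`. -/
theorem combiner_decode (n m : ℕ) (F : (Fin n → Bool) → Bool) (G : (Fin m → Bool) → Bool)
    (H : (Fin n → Bool) → (Fin m → Bool) → Bool → Bool → Bool)
    (hH : ∀ (x : Fin n → Bool) (y : Fin m → Bool) (z z' : Bool),
      H x y z z' = ((F x && z) || (!z && decide (∀ i, x i = true) && G y && z'))) :
    Nat.card {σ : Fin n → Bool | F σ = true} =
        Nat.card {p : (Fin n → Bool) × (Fin m → Bool) × Bool × Bool |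
          H p.1 p.2.1 p.2.2.1 p.2.2.2 = true} / 2 ^ (m + 1) ∧
      Nat.card {σ : Fin m → Bool | G σ = true} =
        Nat.card {p : (Fin n → Bool) × (Fin m → Bool) × Bool × Bool |
          H p.1 p.2.1 p.2.2.1 p.2.2.2 = true} % 2 ^ (m + 1) := by
  classical
  set cF := (Finset.univ.filter fun σ : Fin n → Bool => F σ = true).card with hcF
  set cG := (Finset.univ.filter fun σ : Fin m → Bool => G σ = true).card with hcG
  have hFc : Nat.card {σ : Fin n → Bool | F σ = true} = cF := by
    simp [Nat.card_eq_fintype_card, Fintype.card_subtype, hcF]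
  have hGc : Nat.card {σ : Fin m → Bool | G σ = true} = cG := by
    simp [Nat.card_eq_fintype_card, Fintype.card_subtype, hcG]
  have hGlt : cG < 2 ^ (m + 1) := by
    calc cG ≤ Finset.univ.card := Finset.card_filter_le _ _
    _ = 2 ^ m := by simp
    _ < 2 ^ (m+1) := Nat.pow_lt_pow_right one_lt_two (by omega)
  have key : ∀ x : Fin n → Bool,
      (∑ y : Fin m → Bool, if (decide (∀ i, x i = true) && G y) = true then 1 else 0)
        = if (∀ i, x i = true) then cG else 0 := by
    intro x
    by_cases h : ∀ i, x i = true
    · simp only [if_pos h, decide_eq_true h, Bool.true_and]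
      rw [hcG, Finset.card_filter]
    · simp [h]
  have huniq : ∀ x : Fin n → Bool, (∀ i, x i = true) ↔ x = fun _ => true :=
    fun x => ⟨fun h => funext h, fun h i => congrFun h i⟩
  have hHc : Nat.card {p : (Fin n → Bool) × (Fin m → Bool) × Bool × Bool |
          H p.1 p.2.1 p.2.2.1 p.2.2.2 = true} = 2 ^ (m+1) * cF + cG := by
    rw [Nat.card_eq_fintype_card, Fintype.card_subtype, Finset.card_filter]
    simp only [Set.mem_setOf_eq, hH]
    rw [Fintype.sum_prod_type]
    simp only [Fintype.sum_prod_type, Fintype.sum_bool]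
    simp only [Bool.and_true, Bool.and_false, Bool.not_true, Bool.not_false, Bool.false_and,
      Bool.true_and, Bool.false_or, Bool.or_false]
    simp only [if_neg (by simp : ¬ (false = true)), add_zero]
    calc (∑ x : Fin n → Bool, ∑ y : Fin m → Bool,
          (((if F x = true then 1 else 0) + if F x = true then 1 else 0) +
            if (decide (∀ i, x i = true) && G y) = true then 1 else 0))
        = ∑ x : Fin n → Bool,
            (2 ^ (m+1) * (if F x = true then 1 else 0) + if (∀ i, x i = true) then cG else 0) := by
          refine Finset.sum_congr rfl fun x _ => ?_
          rw [Finset.sum_add_distrib, Finset.sum_const, key]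
          simp [Finset.card_univ, pow_succ]
          by_cases hx : F x = true <;> simp [hx]
      _ = 2 ^ (m+1) * cF + cG := by
          rw [Finset.sum_add_distrib, ← Finset.mul_sum]
          congr 1
          · congr 1
            rw [hcF, Finset.card_filter]
          · simp only [huniq]
            rw [Finset.sum_ite_eq' Finset.univ (fun _ => true) (fun _ => cG)]
            simp
  constructor
  · rw [hFc, hHc, Nat.mul_add_div (by positivity), Nat.div_eq_of_lt hGlt, add_zero]
  · rw [hGc, hHc, Nat.mul_add_mod, Nat.mod_eq_of_lt hGlt]
end

section
/- Let n, m₁, m₂ be natural numbers and let F : (Fin n → Bool) → Bool, G₁ : (Fin m₁ → Bool) → Bool, G₂ : (Fin m₂ → Bool) → Bool be Boolean functions. Let H' be the combiner of G₁ and G₂ (a Boolean function in the m₁ + m₂ + 2 variables (y₁, y₂, w, w') given by H'(y₁,y₂,w,w') = (G₁ y₁ ∧ w) ∨ (¬w ∧ (∀ i, y₁ i = true) ∧ G₂ y₂ ∧ w')), and let H be the combiner of F and H' (a Boolean function in the variables (x, y₁, y₂, w, w', z, z') given by H = (F x ∧ z) ∨ (¬z ∧ (∀ i, x i = true) ∧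 H'(y₁,y₂,w,w') ∧ z')). Then ‖H‖ = ‖F‖ · 2^(m₁+m₂+3) + ‖G₁‖ · 2^(m₂+1) + ‖G₂‖. -/
theorem card_eq_sum {α} [Fintype α] (P : α → Bool) :
    Nat.card {a | P a = true} = ∑ a : α, if P a = true then 1 else 0 := by
  rw [Nat.card_eq_fintype_card, Fintype.card_subtype, Finset.card_filter]
  rfl

theorem sum_ite_const_eq {α : Type} [Fintype α] (P : α → Bool) (c : ℕ) :
    (∑ a, if P a = true then c else 0) = (∑ a, if P a = true then 1 else 0) * c := by
  rw [Finset.sum_mul]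
  exact Finset.sum_congr rfl fun a _ => by split <;> simp

/-- Nested (three-formula) application of the combining lemma:
`‖H‖ = ‖F‖ * 2^(m₁+m₂+3) + ‖G₁‖ * 2^(m₂+1) + ‖G₂‖`. -/
theorem combiner_nested_count (n m₁ m₂ : ℕ)
    (F : (Fin n → Bool) → Bool) (G₁ : (Fin m₁ → Bool) → Bool) (G₂ : (Fin m₂ → Bool) → Bool)
    (H' : (Fin m₁ → Bool) → (Fin m₂ → Bool) → Bool → Bool → Bool)
    (hH' : ∀ (y₁ : Fin m₁ → Bool) (y₂ : Fin m₂ → Bool) (w w' : Bool),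
      H' y₁ y₂ w w' = ((G₁ y₁ && w) || (!w && decide (∀ i, y₁ i = true) && G₂ y₂ && w')))
    (H : (Fin n → Bool) → (Fin m₁ → Bool) → (Fin m₂ → Bool) → Bool → Bool → Bool → Bool → Bool)
    (hH : ∀ (x : Fin n → Bool) (y₁ : Fin m₁ → Bool) (y₂ : Fin m₂ → Bool) (w w' z z' : Bool),
      H x y₁ y₂ w w' z z' =
        ((F x && z) || (!z && decide (∀ i, x i = true) && H' y₁ y₂ w w' && z'))) :
    Nat.card {p : (Fin n → Bool) × (Fin m₁ → Bool) × (Fin m₂ → Bool) × Bool × Bool × Bool × Bool |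
        H p.1 p.2.1 p.2.2.1 p.2.2.2.1 p.2.2.2.2.1 p.2.2.2.2.2.1 p.2.2.2.2.2.2 = true} =
      Nat.card {σ : Fin n → Bool | F σ = true} * 2 ^ (m₁ + m₂ + 3) +
        Nat.card {σ : Fin m₁ → Bool | G₁ σ = true} * 2 ^ (m₂ + 1) +
          Nat.card {σ : Fin m₂ → Bool | G₂ σ = true} := by
  have hx : ∀ (k : ℕ) (x : Fin k → Bool), (∀ i, x i = true) ↔ x = fun _ => true := by
    intro k x; constructor
    · intro h; funext i; exact h i
    · intro h i; rw [h]
  rw [card_eq_sum, card_eq_sum, card_eq_sum, card_eq_sum]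
  simp only [hH, hH', Fintype.sum_prod_type, Fintype.sum_bool]
  simp only [Bool.and_true, Bool.and_false, Bool.or_false, Bool.false_or, Bool.not_true,
    Bool.not_false, Bool.false_and, Bool.true_and, Bool.and_self]
  simp only [Bool.and_eq_true, decide_eq_true_eq, hx, ite_and, Bool.false_eq_true, if_false]
  simp only [Finset.sum_add_distrib, Finset.sum_const, Finset.card_univ, smul_eq_mul,
    Finset.sum_ite_eq', Finset.mem_univ, if_true]
  simp only [mul_ite, mul_zero, mul_one, Finset.sum_ite_irrel, Finset.sum_const_zero,
    Finset.sum_ite_eq', Finset.mem_univ, if_true, Fintype.card_fun, Fintype.card_bool,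
    Fintype.card_fin]
  rw [sum_ite_const_eq F, sum_ite_const_eq G₁]
  ring
end
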